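/- arXiv:math/9907119 — 3 statements merged into one kernel-verified Lean document; each statement's English description precedes it below -/
import Mathlib

section
/- If G and H are circulant graphs on m and n vertices respectively with gcd(m,n) = 1, then the tensor product G ⊗ H is a circulant graph. -/
open SimpleGraph

/-- A graph is circulant iff its automorphism group contains a transitive cyclic subgroup,
i.e. some automorphism whose iterates act transitively on the vertices. -/
def SimpleGraph.IsCirculant {V : Type*} (G : SimpleGraph V) : Prop :=
  ∃ φ : G ≃g G, ∀ v w : V, ∃ k : ℕ, (φ.toEquiv ^ k) v = w

/-- The tensor (categorical/Kronecker) product of simple graphs. -/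
def SimpleGraph.tensor {α β : Type*} (G : SimpleGraph α) (H : SimpleGraph β) :
    SimpleGraph (α × β) where
  Adj x y := G.Adj x.1 y.1 ∧ H.Adj x.2 y.2
  symm := ⟨fun _ _ h => ⟨G.symm.symm _ _ h.1, H.symm.symm _ _ h.2⟩⟩
  loopless := ⟨fun x h => G.loopless.irrefl x.1 h.1⟩

/-- If a permutation's powers act transitively and it fixes a point after `t` steps,
then `e ^ t = 1`. -/
lemma fix_all {α : Type*} (e : Equiv.Perm α)
    (h : ∀ v w : α, ∃ k : ℕ, (e ^ k) v = w)
    {t : ℕ} {u : α} (hu : (e ^ t) u = u) : e ^ t = 1 := by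
  ext w
  obtain ⟨s, hs⟩ := h u w
  have comm : (e ^ t) ((e ^ s) u) = (e ^ s) ((e ^ t) u) := by
    rw [← Equiv.Perm.mul_apply, ← Equiv.Perm.mul_apply, ← pow_add, ← pow_add, add_comm]
  rw [← hs, comm, hu]
  simp

/-- A transitive permutation on a fintype satisfies `e ^ card = 1`. -/
lemma perm_pow_card_eq_one' {α : Type*} [Fintype α] (e : Equiv.Perm α)
    (h : ∀ v w : α, ∃ k : ℕ, (e ^ k) v = w) :
    e ^ (Fintype.card α) = 1 := by
  rcases isEmpty_or_nonempty α with hα | hα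
  · simp [Fintype.card_eq_zero]
  · obtain ⟨v⟩ := hα
    have hd : 0 < orderOf e := orderOf_pos e
    have hbij : Function.Bijective (fun i : Fin (orderOf e) => (e ^ (i : ℕ)) v) := by
      constructor
      · intro i j hij
        dsimp only at hij
        rcases le_total (i : ℕ) (j : ℕ) with hle | hle
        · have hfix : (e ^ ((j : ℕ) - i)) ((e ^ (i : ℕ)) v) = (e ^ (i : ℕ)) v := by
            rw [← Equiv.Perm.mul_apply, ← pow_add, Nat.sub_add_cancel hle, ← hij]
          have h2 : orderOf e ∣ (j : ℕ) - i :=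
            orderOf_dvd_of_pow_eq_one (fix_all e h hfix)
          have h3 : (j : ℕ) - i = 0 :=
            Nat.eq_zero_of_dvd_of_lt h2 (lt_of_le_of_lt (Nat.sub_le _ _) j.isLt)
          exact Fin.ext (by omega)
        · have hfix : (e ^ ((i : ℕ) - j)) ((e ^ (j : ℕ)) v) = (e ^ (j : ℕ)) v := by
            rw [← Equiv.Perm.mul_apply, ← pow_add, Nat.sub_add_cancel hle, hij]
          have h2 : orderOf e ∣ (i : ℕ) - j :=
            orderOf_dvd_of_pow_eq_one (fix_all e h hfix)
          have h3 : (i : ℕ) - j = 0 :=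
            Nat.eq_zero_of_dvd_of_lt h2 (lt_of_le_of_lt (Nat.sub_le _ _) i.isLt)
          exact Fin.ext (by omega)
      · intro w
        obtain ⟨k, hk⟩ := h v w
        refine ⟨⟨k % orderOf e, Nat.mod_lt _ hd⟩, ?_⟩
        simpa [pow_mod_orderOf] using hk
    have hcard : orderOf e = Fintype.card α := by
      have := Fintype.card_of_bijective hbij
      simpa using this
    rw [← hcard]
    exact pow_orderOf_eq_one e

theorem stmt_0 {α β : Type*} [Fintype α] [Fintype β]
    (G : SimpleGraph α) (H : SimpleGraph β)
    (hcop : Nat.Coprime (Fintype.card α) (Fintype.card β))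
    (hG : G.IsCirculant) (hH : H.IsCirculant) :
    (G.tensor H).IsCirculant := by
  obtain ⟨φ, hφ⟩ := hG
  obtain ⟨ψ, hψ⟩ := hH
  set e := φ.toEquiv with he
  set f := ψ.toEquiv with hf
  have hem : e ^ (Fintype.card α) = 1 := perm_pow_card_eq_one' e hφ
  have hfn : f ^ (Fintype.card β) = 1 := perm_pow_card_eq_one' f hψ
  refine ⟨⟨Equiv.prodCongr e f, ?_⟩, ?_⟩
  · intro a b
    constructor
    · rintro ⟨h1, h2⟩
      exact ⟨φ.map_rel_iff.mp h1, ψ.map_rel_iff.mp h2⟩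
    · rintro ⟨h1, h2⟩
      exact ⟨φ.map_rel_iff.mpr h1, ψ.map_rel_iff.mpr h2⟩
  · intro v w
    obtain ⟨k₁, hk₁⟩ := hφ v.1 w.1
    obtain ⟨k₂, hk₂⟩ := hψ v.2 w.2
    obtain ⟨k, hka, hkb⟩ := Nat.chineseRemainder hcop k₁ k₂
    have hpow : ∀ (n : ℕ) (x : α × β),
        ((Equiv.prodCongr e f : Equiv.Perm (α × β)) ^ n) x = ((e ^ n) x.1, (f ^ n) x.2) := by
      intro n
      induction n with
      | zero => intro x; simp
      | succ n ih =>
        intro x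
        rw [pow_succ', pow_succ', pow_succ', Equiv.Perm.mul_apply, ih]
        rfl
    refine ⟨k, ?_⟩
    have hek : e ^ k = e ^ k₁ := by
      have hdvd : orderOf e ∣ Fintype.card α := orderOf_dvd_of_pow_eq_one hem
      exact pow_eq_pow_iff_modEq.mpr (hka.of_dvd hdvd)
    have hfk : f ^ k = f ^ k₂ := by
      have hdvd : orderOf f ∣ Fintype.card β := orderOf_dvd_of_pow_eq_one hfn
      exact pow_eq_pow_iff_modEq.mpr (hkb.of_dvd hdvd)
    show ((Equiv.prodCongr e f : Equiv.Perm (α × β)) ^ k) v = w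
    rw [hpow, hek, hfk, hk₁, hk₂]
end

section
/- If m ≥ 3, n ≥ 3, m ≠ n, and gcd(m,n) > 1, then the tensor product K_m ⊗ K_n is not a circulant graph. -/
open SimpleGraph Function Finset

variable {m n : ℕ}

lemma tensor_adj (x y : Fin m × Fin n) :
    ((completeGraph (Fin m)).tensor (completeGraph (Fin n))).Adj x y ↔
      x.1 ≠ y.1 ∧ x.2 ≠ y.2 := Iff.rfl

/-- the common non-neighborhood -/
def NN (x y : Fin m × Fin n) : Finset (Fin m × Fin n) :=
  univ.filter fun z => (x.1 = z.1 ∨ x.2 = z.2) ∧ (y.1 = z.1 ∨ y.2 = z.2)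

lemma mem_NN (x y z : Fin m × Fin n) :
    z ∈ NN x y ↔
      ¬ ((completeGraph (Fin m)).tensor (completeGraph (Fin n))).Adj x z ∧
      ¬ ((completeGraph (Fin m)).tensor (completeGraph (Fin n))).Adj y z := by
  simp only [NN, mem_filter, Finset.mem_univ, true_and, tensor_adj, not_and_or, not_ne_iff]

lemma NN_card_row {x y : Fin m × Fin n} (h1 : x.1 = y.1) (h2 : x.2 ≠ y.2) :
    (NN x y).card = n := by
  have : NN x y = {x.1} ×ˢ univ := by
    ext z
    simp only [NN, mem_filter, Finset.mem_product, Finset.mem_singleton, Finset.mem_univ,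
      and_true, true_and]
    constructor
    · rintro ⟨h | h, h' | h'⟩ <;> first | exact h.symm | simp_all
    · intro h; exact ⟨Or.inl h.symm, Or.inl (h1 ▸ h.symm)⟩
  rw [this]; simp

lemma NN_card_col {x y : Fin m × Fin n} (h1 : x.1 ≠ y.1) (h2 : x.2 = y.2) :
    (NN x y).card = m := by
  have : NN x y = univ ×ˢ {x.2} := by
    ext z
    simp only [NN, mem_filter, Finset.mem_product, Finset.mem_singleton, Finset.mem_univ,
      and_true, true_and]
    constructor
    · rintro ⟨h | h, h' | h'⟩ <;> first | exact h.symm | simp_all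
    · intro h; exact ⟨Or.inr h.symm, Or.inr (h2 ▸ h.symm)⟩
  rw [this]; simp

lemma NN_card_adj {x y : Fin m × Fin n} (h1 : x.1 ≠ y.1) (h2 : x.2 ≠ y.2) :
    (NN x y).card = 2 := by
  have : NN x y = {(x.1, y.2), (y.1, x.2)} := by
    ext z
    simp only [NN, mem_filter, Finset.mem_insert, Finset.mem_singleton, Prod.ext_iff,
      Finset.mem_univ, true_and]
    constructor
    · rintro ⟨h | h, h' | h'⟩
      · exact absurd (h.trans h'.symm) h1
      · exact Or.inl ⟨h.symm, h'.symm⟩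
      · exact Or.inr ⟨h'.symm, h.symm⟩
      · exact absurd (h.trans h'.symm) h2
    · rintro (⟨ha, hb⟩ | ⟨ha, hb⟩) <;> simp_all
  rw [this]
  rw [Finset.card_insert_of_notMem (by simp [Prod.ext_iff]; intro h; exact absurd h h1),
    Finset.card_singleton]

theorem stmt_6 (m n : ℕ) (hm : 3 ≤ m) (hn : 3 ≤ n) (hmn : m ≠ n)
    (hgcd : 1 < Nat.gcd m n) :
    ¬ ((completeGraph (Fin m)).tensor (completeGraph (Fin n))).IsCirculant := by
  rintro ⟨φ, hφ⟩
  -- the cardinality of the common non-neighbourhood is preserved by φ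
  have hcard : ∀ x y : Fin m × Fin n, (NN (φ x) (φ y)).card = (NN x y).card := by
    intro x y
    refine (Finset.card_equiv φ.toEquiv ?_).symm
    intro z
    simp only [mem_NN]
    constructor
    · rintro ⟨h1, h2⟩
      exact ⟨fun h => h1 (φ.map_adj_iff.1 h), fun h => h2 (φ.map_adj_iff.1 h)⟩
    · rintro ⟨h1, h2⟩
      exact ⟨fun h => h1 (φ.map_adj_iff.2 h), fun h => h2 (φ.map_adj_iff.2 h)⟩
  have hA : ∀ x y : Fin m × Fin n, x ≠ y → ((NN x y).card = n ↔ x.1 = y.1) := by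
    intro x y hxy
    by_cases h1 : x.1 = y.1
    · have h2 : x.2 ≠ y.2 := fun h2 => hxy (Prod.ext h1 h2)
      simp [NN_card_row h1 h2, h1]
    · simp only [h1, iff_false]
      by_cases h2 : x.2 = y.2
      · rw [NN_card_col h1 h2]; omega
      · rw [NN_card_adj h1 h2]; omega
  have hB : ∀ x y : Fin m × Fin n, x ≠ y → ((NN x y).card = m ↔ x.2 = y.2) := by
    intro x y hxy
    by_cases h2 : x.2 = y.2
    · have h1 : x.1 ≠ y.1 := fun h1 => hxy (Prod.ext h1 h2)
      simp [NN_card_col h1 h2, h2]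
    · simp only [h2, iff_false]
      by_cases h1 : x.1 = y.1
      · rw [NN_card_row h1 h2]; omega
      · rw [NN_card_adj h1 h2]; omega
  have key1 : ∀ x y : Fin m × Fin n, (φ x).1 = (φ y).1 ↔ x.1 = y.1 := by
    intro x y
    by_cases hxy : x = y
    · subst hxy; simp
    · have hxy' : φ x ≠ φ y := fun h => hxy (φ.toEquiv.injective h)
      rw [← hA _ _ hxy, ← hA _ _ hxy', hcard]
  have key2 : ∀ x y : Fin m × Fin n, (φ x).2 = (φ y).2 ↔ x.2 = y.2 := by
    intro x y
    by_cases hxy : x = y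
    · subst hxy; simp
    · have hxy' : φ x ≠ φ y := fun h => hxy (φ.toEquiv.injective h)
      rw [← hB _ _ hxy, ← hB _ _ hxy', hcard]
  -- product structure of φ
  set a0 : Fin m := ⟨0, by omega⟩ with ha0
  set b0 : Fin n := ⟨0, by omega⟩ with hb0
  set σ : Fin m → Fin m := fun a => (φ (a, b0)).1 with hσ
  set τ : Fin n → Fin n := fun b => (φ (a0, b)).2 with hτ
  have hφab : ∀ v : Fin m × Fin n, φ v = (σ v.1, τ v.2) := by
    rintro ⟨a, b⟩
    exact Prod.ext ((key1 (a, b) (a, b0)).2 rfl) ((key2 (a, b) (a0, b)).2 rfl)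
  have hσinj : Function.Injective σ := by
    intro a a' h
    exact (key1 (a, b0) (a', b0)).1 h
  have hτinj : Function.Injective τ := by
    intro b b' h
    exact (key2 (a0, b) (a0, b')).1 h
  -- iterates
  have hiter : ∀ (k : ℕ) (v : Fin m × Fin n),
      (φ.toEquiv ^ k) v = (σ^[k] v.1, τ^[k] v.2) := by
    intro k
    induction k with
    | zero => intro v; simp
    | succ k ih =>
      intro v
      rw [pow_succ]
      have h1 : (φ.toEquiv ^ k * φ.toEquiv) v = (φ.toEquiv ^ k) (φ.toEquiv v) := rfl
      rw [h1, show (φ.toEquiv v) = (σ v.1, τ v.2) from hφab v, ih]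
      rw [Function.iterate_succ_apply, Function.iterate_succ_apply]
  have hσtrans : ∀ a : Fin m, ∃ k, σ^[k] a0 = a := by
    intro a
    obtain ⟨k, hk⟩ := hφ (a0, b0) (a, b0)
    rw [hiter] at hk
    exact ⟨k, (Prod.ext_iff.1 hk).1⟩
  have hτtrans : ∀ b : Fin n, ∃ k, τ^[k] b0 = b := by
    intro b
    obtain ⟨k, hk⟩ := hφ (a0, b0) (a0, b)
    rw [hiter] at hk
    exact ⟨k, (Prod.ext_iff.1 hk).2⟩
  -- periodicity
  have hσper : a0 ∈ Function.periodicPts σ := by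
    have hσbij : Function.Bijective σ := Finite.injective_iff_bijective.1 hσinj
    let e : Equiv.Perm (Fin m) := Equiv.ofBijective σ hσbij
    refine ⟨orderOf e, orderOf_pos e, ?_⟩
    show σ^[orderOf e] a0 = a0
    have hcoe : ⇑e = σ := rfl
    rw [← hcoe, Equiv.Perm.iterate_eq_pow, pow_orderOf_eq_one]
    rfl
  have hτper : b0 ∈ Function.periodicPts τ := by
    have hτbij : Function.Bijective τ := Finite.injective_iff_bijective.1 hτinj
    let e : Equiv.Perm (Fin n) := Equiv.ofBijective τ hτbij
    refine ⟨orderOf e, orderOf_pos e, ?_⟩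
    show τ^[orderOf e] b0 = b0
    have hcoe : ⇑e = τ := rfl
    rw [← hcoe, Equiv.Perm.iterate_eq_pow, pow_orderOf_eq_one]
    rfl
  -- minimal periods are m and n
  have hrm : Function.minimalPeriod σ a0 = m := by
    set r := Function.minimalPeriod σ a0 with hr
    have hrpos : 0 < r := Function.minimalPeriod_pos_of_mem_periodicPts hσper
    have hinj : Function.Injective (fun i : Fin r => σ^[(i : ℕ)] a0) := by
      intro i j hij
      have := Function.iterate_injOn_Iio_minimalPeriod (f := σ) (x := a0)
        (Set.mem_Iio.2 (hr ▸ i.2)) (Set.mem_Iio.2 (hr ▸ j.2)) hij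
      exact Fin.ext this
    have hsurj : Function.Surjective (fun i : Fin r => σ^[(i : ℕ)] a0) := by
      intro a
      obtain ⟨k, hk⟩ := hσtrans a
      refine ⟨⟨k % r, Nat.mod_lt _ hrpos⟩, ?_⟩
      simp only []
      rw [hr]
      rw [Function.iterate_mod_minimalPeriod_eq]
      exact hk
    have h1 := Fintype.card_le_of_injective _ hinj
    have h2 := Fintype.card_le_of_surjective _ hsurj
    simp only [Fintype.card_fin] at h1 h2
    omega
  have hrn : Function.minimalPeriod τ b0 = n := by
    set r := Function.minimalPeriod τ b0 with hr
    have hrpos : 0 < r := Function.minimalPeriod_pos_of_mem_periodicPts hτper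
    have hinj : Function.Injective (fun i : Fin r => τ^[(i : ℕ)] b0) := by
      intro i j hij
      have := Function.iterate_injOn_Iio_minimalPeriod (f := τ) (x := b0)
        (Set.mem_Iio.2 (hr ▸ i.2)) (Set.mem_Iio.2 (hr ▸ j.2)) hij
      exact Fin.ext this
    have hsurj : Function.Surjective (fun i : Fin r => τ^[(i : ℕ)] b0) := by
      intro b
      obtain ⟨k, hk⟩ := hτtrans b
      refine ⟨⟨k % r, Nat.mod_lt _ hrpos⟩, ?_⟩
      simp only []
      rw [hr]
      rw [Function.iterate_mod_minimalPeriod_eq]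
      exact hk
    have h1 := Fintype.card_le_of_injective _ hinj
    have h2 := Fintype.card_le_of_surjective _ hsurj
    simp only [Fintype.card_fin] at h1 h2
    omega
  -- final contradiction
  obtain ⟨k, hk⟩ := hφ (a0, b0) (σ a0, b0)
  rw [hiter] at hk
  obtain ⟨hk1, hk2⟩ := Prod.ext_iff.1 hk
  have hn_dvd : n ∣ k := by
    have h : Function.IsPeriodicPt τ k b0 := hk2
    rwa [Function.isPeriodicPt_iff_minimalPeriod_dvd, hrn] at h
  rcases Nat.eq_zero_or_pos k with h0 | hpos
  · subst h0
    have h : Function.IsPeriodicPt σ 1 a0 := by have h' : σ a0 = a0 := (by simpa using hk1.symm); exact h'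
    rw [Function.isPeriodicPt_iff_minimalPeriod_dvd, hrm] at h
    have := Nat.le_of_dvd one_pos h
    omega
  · have hk1' : σ^[k - 1] a0 = a0 := by
      apply hσinj
      have h1 : (k - 1) + 1 = k := by omega
      calc σ (σ^[k - 1] a0) = σ^[(k - 1) + 1] a0 :=
            (Function.iterate_succ_apply' σ (k - 1) a0).symm
        _ = σ a0 := by rw [h1]; exact hk1
    have hm_dvd : m ∣ k - 1 := by
      have h : Function.IsPeriodicPt σ (k - 1) a0 := hk1'
      rwa [Function.isPeriodicPt_iff_minimalPeriod_dvd, hrm] at h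
    have hg1 : Nat.gcd m n ∣ k - 1 := dvd_trans (Nat.gcd_dvd_left m n) hm_dvd
    have hg2 : Nat.gcd m n ∣ k := dvd_trans (Nat.gcd_dvd_right m n) hn_dvd
    have hgone : Nat.gcd m n ∣ 1 := by
      have := Nat.dvd_sub hg2 hg1
      rwa [show k - (k - 1) = 1 by omega] at this
    have := Nat.le_of_dvd one_pos hgone
    omega
end

section
/- Let G be a circulant graph (possibly with loops) on m vertices and let K_n* denote the complete graph on n vertices with a loop at every vertex. Then K_n* ⊗ G is a circulant graph on nm vertices. -/
/-- Circulant for graphs possibly with loops (given as a symmetric adjacency relation):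
some permutation preserving adjacency whose powers act transitively. -/
def Rel.IsCirculant {V : Type*} (R : V → V → Prop) : Prop :=
  ∃ φ : Equiv.Perm V, (∀ a b : V, R (φ a) (φ b) ↔ R a b) ∧
    ∀ v w : V, ∃ k : ℕ, (φ ^ k) v = w

/-- Tensor product of adjacency relations (loops allowed). -/
def Rel.tensor {α β : Type*} (R : α → α → Prop) (S : β → β → Prop) :
    α × β → α × β → Prop :=
  fun p q => R p.1 q.1 ∧ S p.2 q.2

/-- The adjacency relation of `K_n^*`, the complete graph with a loop at every vertex. -/
def completeLooped (n : ℕ) : Fin n → Fin n → Prop := fun _ _ => True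

lemma isCirculant_of_isEmpty {V : Type*} [IsEmpty V] (R : V → V → Prop) :
    Rel.IsCirculant R :=
  ⟨1, fun a _ => (IsEmpty.false a).elim, fun v _ => (IsEmpty.false v).elim⟩

theorem stmt_14 {A : Type*} [Fintype A] (m n : ℕ) (hA : Fintype.card A = m)
    (R : A → A → Prop) (hsymm : Symmetric R) (hR : Rel.IsCirculant R) :
    Rel.IsCirculant (Rel.tensor (completeLooped n) R) ∧
      Fintype.card (Fin n × A) = n * m := by
  classical
  refine ⟨?_, by simp [hA]⟩
  rcases Nat.eq_zero_or_pos m with hm | hm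
  · haveI : IsEmpty A := Fintype.card_eq_zero_iff.mp (by omega)
    haveI : IsEmpty (Fin n × A) := Prod.isEmpty_right
    exact isCirculant_of_isEmpty _
  rcases Nat.eq_zero_or_pos n with hn | hn
  · subst hn
    haveI : IsEmpty (Fin 0 × A) := Prod.isEmpty_left
    exact isCirculant_of_isEmpty _
  haveI : NeZero m := ⟨hm.ne'⟩
  haveI : NeZero n := ⟨hn.ne'⟩
  haveI : NeZero (n * m) := ⟨by positivity⟩
  obtain ⟨φ, hφR, hφt⟩ := hR
  obtain ⟨a0⟩ : Nonempty A := Fintype.card_pos_iff.mp (by omega)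
  set f : ℕ → A := fun k => (φ ^ k) a0 with hf
  have hfadd : ∀ j k, f (j + k) = (φ ^ j) (f k) := by
    intro j k; simp [hf, pow_add, Equiv.Perm.mul_apply]
  have hN : ∃ k, 0 < k ∧ f k = a0 :=
    ⟨orderOf φ, orderOf_pos φ, by simp [hf, pow_orderOf_eq_one]⟩
  set d := Nat.find hN with hd
  obtain ⟨hd0, hfd⟩ : 0 < d ∧ f d = a0 := Nat.find_spec hN
  have hdmin : ∀ k, k < d → ¬(0 < k ∧ f k = a0) := fun k hk => Nat.find_min hN hk
  -- periodicity
  have hper : ∀ k, f (k + d) = f k := by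
    intro k
    rw [hfadd k d, hfd]
  have hmod : ∀ k, f (k % d) = f k := by
    intro k
    conv_rhs => rw [← Nat.mod_add_div k d]
    generalize k / d = q
    induction q with
    | zero => simp
    | succ q ih => rw [Nat.mul_succ, ← Nat.add_assoc, hper, ih]
  -- injectivity on [0, d)
  have hinj : ∀ i j, i < d → j < d → f i = f j → i = j := by
    intro i j hi hj hij
    by_contra hne
    wlog hlt : i < j generalizing i j
    · exact this j i hj hi hij.symm (Ne.symm hne) (by omega)
    have h1 : (φ ^ i) ((φ ^ (j - i)) a0) = (φ ^ i) a0 := by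
      rw [← Equiv.Perm.mul_apply, ← pow_add]
      have : i + (j - i) = j := by omega
      rw [this]
      exact hij.symm
    have h2 : f (j - i) = a0 := (φ ^ i).injective h1
    exact hdmin (j - i) (by omega) ⟨by omega, h2⟩
  -- d = m via bijection Fin d ≃ A
  have hFbij : Function.Bijective (fun k : Fin d => f k) := by
    constructor
    · intro i j hij
      exact Fin.ext (hinj i j i.isLt j.isLt hij)
    · intro a
      obtain ⟨k, hk⟩ := hφt a0 a
      exact ⟨⟨k % d, Nat.mod_lt _ hd0⟩, by simpa [hmod k] using hk⟩
  have hdm : d = m := by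
    have := Fintype.card_of_bijective hFbij
    simpa [hA] using this
  have hmodm : ∀ k, f (k % m) = f k := hdm ▸ hmod
  -- the equivalence e' : ZMod m ≃ A
  have he'bij : Function.Bijective (fun z : ZMod m => f z.val) := by
    constructor
    · intro z w hzw
      have := hinj z.val w.val (hdm ▸ z.val_lt) (hdm ▸ w.val_lt) hzw
      exact ZMod.val_injective m this
    · intro a
      obtain ⟨k, hk⟩ := hφt a0 a
      refine ⟨(k : ZMod m), ?_⟩
      show f ((k : ZMod m)).val = a
      rw [ZMod.val_natCast, hmodm k]
      exact hk
  set e' : ZMod m ≃ A := Equiv.ofBijective _ he'bij with he'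
  have he'apply : ∀ z : ZMod m, e' z = f z.val := fun z => rfl
  have hkey : ∀ k : ℕ, e' (k : ZMod m) = f k := by
    intro k
    rw [he'apply, ZMod.val_natCast, hmodm k]
  have hcastval : ∀ z : ZMod m, ((z.val : ℕ) : ZMod m) = z := fun z => by rw [ZMod.natCast_val, ZMod.cast_id]
  have hshift : ∀ z : ZMod m, e' (z + 1) = φ (e' z) := by
    intro z
    have h1 : z + 1 = ((z.val + 1 : ℕ) : ZMod m) := by
      push_cast [hcastval]
      ring
    rw [h1, hkey, he'apply]
    have := hfadd 1 z.val
    rw [Nat.add_comm] at this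
    simpa using this
  have hRs : ∀ z w : ZMod m, R (e' (z + 1)) (e' (w + 1)) ↔ R (e' z) (e' w) := by
    intro z w
    rw [hshift, hshift, hφR]
  -- the equivalence g : ZMod (n*m) ≃ Fin n × A
  have hdiv : ∀ z : ZMod (n * m), z.val / m < n := by
    intro z
    have h := z.val_lt
    exact Nat.div_lt_of_lt_mul (lt_of_lt_of_eq h (Nat.mul_comm n m))
  set g : ZMod (n * m) ≃ Fin n × A :=
    { toFun := fun z => (⟨z.val / m, hdiv z⟩, e' ((z.val : ℕ) : ZMod m)),
      invFun := fun p => (((p.1 : ℕ) * m + (e'.symm p.2).val : ℕ) : ZMod (n * m)),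
      left_inv := by
        intro z
        simp only [Equiv.symm_apply_apply]
        have h1 : ((((z.val : ℕ) : ZMod m)).val) = z.val % m := ZMod.val_natCast _ _
        rw [h1]
        have h2 : z.val / m * m + z.val % m = z.val := by
          rw [Nat.div_add_mod' z.val m]
        rw [h2, ZMod.natCast_val, ZMod.cast_id]
      right_inv := by
        rintro ⟨i, a⟩
        have hv : (e'.symm a).val < m := (e'.symm a).val_lt
        have hlt : (i : ℕ) * m + (e'.symm a).val < n * m := by
          have hi : (i : ℕ) < n := i.isLt
          calc (i : ℕ) * m + (e'.symm a).val < (i : ℕ) * m + m := by omega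
            _ = ((i : ℕ) + 1) * m := by ring
            _ ≤ n * m := Nat.mul_le_mul_right m (by omega)
        have hval : (((i : ℕ) * m + (e'.symm a).val : ℕ) : ZMod (n * m)).val
            = (i : ℕ) * m + (e'.symm a).val := by
          rw [ZMod.val_natCast, Nat.mod_eq_of_lt hlt]
        ext
        · simp only [hval]
          rw [Nat.mul_comm, Nat.mul_add_div hm, Nat.div_eq_of_lt hv, Nat.add_zero]
        · simp only [hval]
          have : ((((i : ℕ) * m + (e'.symm a).val : ℕ)) : ZMod m)
              = (((e'.symm a).val : ℕ) : ZMod m) := by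
            push_cast
            simp [ZMod.natCast_self]
          rw [this, hcastval, Equiv.apply_symm_apply] } with hg
  -- the permutation
  set σ : Equiv.Perm (ZMod (n * m)) := Equiv.addRight 1 with hσ
  set ψ : Equiv.Perm (Fin n × A) := (g.symm.trans σ).trans g with hψ
  have hψapply : ∀ p, ψ p = g (g.symm p + 1) := fun p => rfl
  have hcastval' : ∀ z : ZMod (n * m), ((z.val : ℕ) : ZMod (n * m)) = z :=
    fun z => by rw [ZMod.natCast_val, ZMod.cast_id]
  have hpow : ∀ (k : ℕ) (p), (ψ ^ k) p = g (g.symm p + (k : ZMod (n * m))) := by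
    intro k
    induction k with
    | zero => intro p; simp
    | succ k ih =>
        intro p
        rw [pow_succ, Equiv.Perm.mul_apply, ih (ψ p), hψapply,
          Equiv.symm_apply_apply]
        congr 1
        push_cast
        ring
  -- the reduction map is additive
  have hπ : ∀ z : ZMod (n * m), (((z + 1).val : ℕ) : ZMod m) = ((z.val : ℕ) : ZMod m) + 1 := by
    intro z
    have hdvd : m ∣ n * m := dvd_mul_left m n
    have h1 : ∀ w : ZMod (n * m), ((w.val : ℕ) : ZMod m) = ZMod.castHom hdvd (ZMod m) w := by
      intro w
      rw [ZMod.castHom_apply, ← ZMod.natCast_val]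
    rw [h1, h1, map_add, map_one]
  have hrelg : ∀ x y : ZMod (n * m),
      Rel.tensor (completeLooped n) R (g x) (g y) ↔ R (e' ((x.val : ℕ) : ZMod m)) (e' ((y.val : ℕ) : ZMod m)) := by
    intro x y
    simp [Rel.tensor, completeLooped, hg]
  refine ⟨ψ, ?_, ?_⟩
  · intro p q
    rw [hψapply, hψapply, hrelg]
    rw [hπ, hπ, hRs]
    have hp : g (g.symm p) = p := g.apply_symm_apply p
    have hq : g (g.symm q) = q := g.apply_symm_apply q
    conv_rhs => rw [← hp, ← hq, hrelg]
  · intro v w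
    refine ⟨(g.symm w - g.symm v).val, ?_⟩
    rw [hpow, hcastval']
    simp
end
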